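/- Let p be an odd prime, q a prime different from p, g a primitive root modulo p, and r an integer with 2r + 2 ≤ p - 3. Suppose a_0, ..., a_r are integers such that the algebraic number a_0ζ^{-1} + a_1ζ^{-g} + ... + a_rζ^{-g^r} - a_0ζ - a_1ζ^{g} - ... - a_rζ^{g^r} is divisible by q in Z[ζ], where ζ is a primitive p-th root of unity. Then q divides every a_i. -/

import Mathlib

open NumberField
open scoped nonZeroDivisors

noncomputable abbrev CycField (p : ℕ+) := CyclotomicField p ℚ

instance (p : ℕ+) : NumberField (CycField p) :=
  @IsCyclotomicExtension.numberField {(p : ℕ)} ℚ _ _ _ _ _ _ (CyclotomicField.isCyclotomicExtension _ _)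

open Finset

open Polynomial in
lemma trace_zeta_pow_aux {P : ℕ+} [hp : Fact (P : ℕ).Prime] {K : Type*} [Field K]
    [Algebra ℚ K] [IsCyclotomicExtension {(P : ℕ)} ℚ K] {ζ : K}
    (hζ : IsPrimitiveRoot ζ (P : ℕ)) (m : ℕ) :
    Algebra.trace ℚ K (ζ ^ m) = if (P : ℕ) ∣ m then ((P : ℕ) : ℚ) - 1 else -1 := by
  haveI : CharZero K := charZero_of_injective_algebraMap (algebraMap ℚ K).injective
  have hfin : Module.finrank ℚ K = (P : ℕ) - 1 := by
    rw [IsCyclotomicExtension.finrank K (cyclotomic.irreducible_rat P.pos),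
      Nat.totient_prime hp.out]
  split_ifs with hdvd
  · obtain ⟨c, rfl⟩ := hdvd
    rw [pow_mul, hζ.pow_eq_one, one_pow]
    have := Algebra.trace_algebraMap (R := ℚ) (S := K) 1
    rw [map_one] at this
    rw [this, hfin, nsmul_eq_mul, mul_one, Nat.cast_sub hp.out.one_le, Nat.cast_one]
  · have hη : IsPrimitiveRoot (ζ ^ m) (P : ℕ) :=
      hζ.pow_of_coprime m (Nat.Coprime.symm (hp.out.coprime_iff_not_dvd.2 hdvd))
    have h1 := PowerBasis.trace_gen_eq_nextCoeff_minpoly (hη.powerBasis ℚ)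
    rw [IsPrimitiveRoot.powerBasis_gen] at h1
    have h2 : cyclotomic (P : ℕ) ℚ = minpoly ℚ (ζ ^ m) := by
      convert Polynomial.cyclotomic_eq_minpoly_rat hη P.pos using 2 <;>
        exact Subsingleton.elim _ _
    refine h1.trans ?_
    have hnc : (cyclotomic (P : ℕ) ℚ).nextCoeff = 1 := by
      rw [nextCoeff, natDegree_cyclotomic, Nat.totient_prime hp.out]
      rw [if_neg (by have := hp.out.two_le; omega)]
      rw [cyclotomic_prime, finset_sum_coeff]
      have h2 : (P : ℕ) - 1 - 1 ∈ Finset.range (P : ℕ) := by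
        simp [Finset.mem_range]; have := hp.out.two_le; omega
      rw [Finset.sum_eq_single ((P : ℕ) - 1 - 1)]
      · simp
      · intro b _ hb; simp [coeff_X_pow, Ne.symm hb]
      · intro hb; exact absurd h2 hb
    rw [← h2, hnc]

/-- If `g` is a primitive root mod `p`, `2r + 2 ≤ p - 3`, and
`∑ aᵢ ζ^{-gⁱ} - ∑ aᵢ ζ^{gⁱ}` is divisible by `q` in `ℤ[ζ]`, then `q` divides every `aᵢ`. -/
theorem coeffs_div_of_q_dvd (p q g r : ℕ) (hp : p.Prime) (hq : q.Prime)
    (hpo : Odd p) (hpq : p ≠ q)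
    (hg : orderOf (g : ZMod p) = p - 1) (hr : 2 * r + 2 ≤ p - 3)
    (ζ : CycField ⟨p, hp.pos⟩) (hζ : IsPrimitiveRoot ζ p)
    (a : Fin (r + 1) → ℤ)
    (h : ∃ γ : 𝓞 (CycField ⟨p, hp.pos⟩),
      (∑ i : Fin (r + 1), (a i : CycField ⟨p, hp.pos⟩) * (ζ ^ (g ^ (i : ℕ)))⁻¹) -
        (∑ i : Fin (r + 1), (a i : CycField ⟨p, hp.pos⟩) * ζ ^ (g ^ (i : ℕ))) =
      (q : CycField ⟨p, hp.pos⟩) * γ) :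
    ∀ i, (q : ℤ) ∣ a i := by
  intro k
  obtain ⟨γ, hγ⟩ := h
  haveI : Fact p.Prime := ⟨hp⟩
  have hp5 : 5 ≤ p := by omega
  -- basic ZMod facts
  have hg1 : (g : ZMod p) ^ (p - 1) = 1 := by rw [← hg]; exact pow_orderOf_eq_one _
  have hg0 : (g : ZMod p) ≠ 0 := by
    intro h0
    rw [h0, zero_pow (by omega)] at hg1
    exact one_ne_zero hg1.symm
  have main : ∀ i j : ℕ, i ≤ j → j < p - 1 →
      (g : ZMod p) ^ i = (g : ZMod p) ^ j → i = j := by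
    intro i j hle hj hij
    have h1 : (g : ZMod p) ^ i * (g : ZMod p) ^ (j - i) = (g : ZMod p) ^ i * 1 := by
      rw [mul_one, ← pow_add, show i + (j - i) = j from by omega, hij]
    have h2 : (g : ZMod p) ^ (j - i) = 1 := mul_left_cancel₀ (pow_ne_zero _ hg0) h1
    have h3 : (p - 1) ∣ (j - i) := by rw [← hg]; exact orderOf_dvd_of_pow_eq_one h2
    have h4 := Nat.eq_zero_of_dvd_of_lt h3 (by omega)
    omega
  have hpow_inj : ∀ i j : ℕ, i < p - 1 → j < p - 1 →
      (g : ZMod p) ^ i = (g : ZMod p) ^ j → i = j := by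
    intro i j hi hj hij
    rcases le_total i j with hle | hle
    · exact main i j hle hj hij
    · exact (main j i hle hi hij.symm).symm
  have hA : ∀ i j : ℕ, i ≤ r → j ≤ r → (g : ZMod p) ^ i + (g : ZMod p) ^ j ≠ 0 := by
    intro i j hi hj h0
    have hij : (g : ZMod p) ^ i = -(g : ZMod p) ^ j := by linear_combination h0
    have hsq : (g : ZMod p) ^ (2 * i) = (g : ZMod p) ^ (2 * j) := by
      rw [two_mul, pow_add, two_mul, pow_add, hij]; ring
    have hij2 : i = j := by
      have := hpow_inj (2 * i) (2 * j) (by omega) (by omega) hsq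
      omega
    subst hij2
    have h2 : (2 : ZMod p) * (g : ZMod p) ^ i = 0 := by linear_combination h0
    have hgi : (g : ZMod p) ^ i ≠ 0 := pow_ne_zero _ hg0
    have h2' : (2 : ZMod p) ≠ 0 := by
      have h2'' : ((2 : ℕ) : ZMod p) ≠ 0 := by
        rw [Ne, ZMod.natCast_eq_zero_iff]
        intro hd
        have := Nat.le_of_dvd (by norm_num) hd
        omega
      simpa using h2''
    rcases mul_eq_zero.1 h2 with h | h
    exacts [h2' h, hgi h]
  have hm1 : ((p - 1 : ℕ) : ZMod p) = -1 := by
    rw [Nat.cast_sub hp.one_le, ZMod.natCast_self, Nat.cast_one, zero_sub]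
  have hnd1 : ∀ i j : ℕ, i ≤ r → j ≤ r →
      ¬ p ∣ (g ^ i * (p - 1) + g ^ j * (p - 1)) := by
    intro i j hi hj hd
    have hc : ((g ^ i * (p - 1) + g ^ j * (p - 1) : ℕ) : ZMod p) = 0 :=
      (ZMod.natCast_eq_zero_iff _ _).2 hd
    rw [Nat.cast_add, Nat.cast_mul, Nat.cast_mul, Nat.cast_pow, Nat.cast_pow, hm1] at hc
    exact hA i j hi hj (by linear_combination -hc)
  have hnd2 : ∀ i j : ℕ, i ≤ r → j ≤ r → i ≠ j →
      ¬ p ∣ (g ^ i + g ^ j * (p - 1)) := by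
    intro i j hi hj hij hd
    have hc : ((g ^ i + g ^ j * (p - 1) : ℕ) : ZMod p) = 0 :=
      (ZMod.natCast_eq_zero_iff _ _).2 hd
    rw [Nat.cast_add, Nat.cast_mul, Nat.cast_pow, Nat.cast_pow, hm1] at hc
    exact hij (hpow_inj i j (by omega) (by omega) (by linear_combination hc))
  have hd3 : ∀ j : ℕ, p ∣ (g ^ j + g ^ j * (p - 1)) := by
    intro j
    rw [← ZMod.natCast_eq_zero_iff]
    push_cast [hm1]
    ring
  -- trace facts
  haveI : Fact (Nat.Prime ((⟨p, hp.pos⟩ : ℕ+) : ℕ)) := ⟨hp⟩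
  have Tpow : ∀ m : ℕ, Algebra.trace ℚ (CycField ⟨p, hp.pos⟩) (ζ ^ m) =
      if p ∣ m then ((p : ℚ) - 1) else -1 :=
    fun m => haveI : NeZero (((⟨p, hp.pos⟩ : ℕ+) : ℕ) : ℚ) := ⟨by exact_mod_cast hp.ne_zero⟩; @trace_zeta_pow_aux ⟨p, hp.pos⟩ ⟨hp⟩ _ _ _ (CyclotomicField.isCyclotomicExtension (n := ((⟨p, hp.pos⟩ : ℕ+) : ℕ)) (K := ℚ)) ζ hζ m
  have hζp : ζ ^ p = 1 := hζ.pow_eq_one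
  have hinv : ∀ n : ℕ, (ζ ^ n)⁻¹ = ζ ^ (n * (p - 1)) := by
    intro n
    refine inv_eq_of_mul_eq_one_left ?_
    rw [← pow_add]
    have he : n * (p - 1) + n = p * n := by
      obtain ⟨c, hc⟩ := Nat.exists_eq_add_of_le hp.one_le
      rw [hc, Nat.add_sub_cancel_left]; ring
    rw [he, pow_mul, hζp, one_pow]
  have tr_mul : ∀ (c : ℤ) (x : CycField ⟨p, hp.pos⟩),
      Algebra.trace ℚ (CycField ⟨p, hp.pos⟩) ((c : CycField ⟨p, hp.pos⟩) * x) =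
        c * Algebra.trace ℚ (CycField ⟨p, hp.pos⟩) x := by
    intro c x
    rw [← zsmul_eq_mul, map_zsmul, zsmul_eq_mul]
  -- multiply the hypothesis by ζ^(-g^k) and take traces
  simp only [hinv] at hγ
  have key := congrArg
    (fun x => Algebra.trace ℚ (CycField ⟨p, hp.pos⟩) (x * ζ ^ (g ^ (k : ℕ) * (p - 1)))) hγ
  simp only [sub_mul, Finset.sum_mul, mul_assoc, ← pow_add, map_sub, map_sum, tr_mul] at key
  have hq' : ((q : ℕ) : CycField ⟨p, hp.pos⟩) = ((q : ℤ) : CycField ⟨p, hp.pos⟩) := by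
    push_cast; ring
  rw [hq', tr_mul] at key
  have e1 : ∀ i : Fin (r + 1),
      Algebra.trace ℚ (CycField ⟨p, hp.pos⟩) (ζ ^ (g ^ (i : ℕ) * (p - 1) + g ^ (k : ℕ) * (p - 1)))
        = -1 := by
    intro i
    rw [Tpow, if_neg (hnd1 _ _ (Nat.lt_succ_iff.mp i.isLt) (Nat.lt_succ_iff.mp k.isLt))]
  have e2 : ∀ i : Fin (r + 1),
      Algebra.trace ℚ (CycField ⟨p, hp.pos⟩) (ζ ^ (g ^ (i : ℕ) + g ^ (k : ℕ) * (p - 1)))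
        = if i = k then ((p : ℚ) - 1) else -1 := by
    intro i
    rw [Tpow]
    by_cases hik : i = k
    · subst hik; rw [if_pos (hd3 _), if_pos rfl]
    · rw [if_neg (hnd2 _ _ (Nat.lt_succ_iff.mp i.isLt) (Nat.lt_succ_iff.mp k.isLt)
        (fun hc => hik (Fin.ext hc))), if_neg hik]
  simp only [e1, e2] at key
  -- the integrality of the right-hand side
  have hint : IsIntegral ℤ ((γ : CycField ⟨p, hp.pos⟩) * ζ ^ (g ^ (k : ℕ) * (p - 1))) :=
    (RingOfIntegers.isIntegral_coe γ).mul ((hζ.isIntegral hp.pos).pow _)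
  obtain ⟨t, ht⟩ := IsIntegrallyClosed.isIntegral_iff.1 (Algebra.isIntegral_trace (L := ℚ) hint)
  have ht' : ((t : ℚ)) = Algebra.trace ℚ (CycField ⟨p, hp.pos⟩)
      ((γ : CycField ⟨p, hp.pos⟩) * ζ ^ (g ^ (k : ℕ) * (p - 1))) := by
    rw [← ht]; simp [algebraMap_int_eq]
  rw [← ht'] at key
  -- evaluate the left-hand side
  have sumeval : (∑ i : Fin (r + 1), (a i : ℚ) * (-1)) -
      (∑ i : Fin (r + 1), (a i : ℚ) * (if i = k then ((p : ℚ) - 1) else -1))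
        = -(a k : ℚ) * p := by
    have hterm : ∀ i : Fin (r + 1), (a i : ℚ) * (if i = k then ((p : ℚ) - 1) else -1)
        = (if i = k then (a i : ℚ) * p else 0) + (a i : ℚ) * (-1) := by
      intro i
      by_cases hik : i = k
      · subst hik; rw [if_pos rfl, if_pos rfl]; ring
      · rw [if_neg hik, if_neg hik]; ring
    rw [Finset.sum_congr rfl (fun i _ => hterm i), Finset.sum_add_distrib,
      Finset.sum_ite_eq' Finset.univ k]
    simp only [Finset.mem_univ, if_pos]
    ring
  rw [sumeval] at key
  -- conclude
  have hZ : -(a k) * (p : ℤ) = (q : ℤ) * t := by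
    exact_mod_cast key
  have hdvd : (q : ℤ) ∣ (p : ℤ) * a k := ⟨-t, by linarith [hZ]⟩
  have hqZ : Prime (q : ℤ) := Nat.prime_iff_prime_int.1 hq
  rcases hqZ.dvd_mul.1 hdvd with hcase | hcase
  · exfalso
    have : q ∣ p := Int.natCast_dvd_natCast.1 hcase
    exact hpq ((Nat.prime_dvd_prime_iff_eq hq hp).1 this).symm
  · exact hcase
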